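/- arXiv:1305.7218 — 10 statements merged into one kernel-verified Lean document; each statement's English description precedes it below -/
import Mathlib

section
/- Let K be a field of characteristic 0, let A, B, C, F ∈ K[X] with B ≠ 0 and F ≠ 0, and let p ∈ K. Suppose that (A′·B − A·B′)·F = p·A·B·C and (C′·B − C·B′)·F = p·A·B·C. Then there exists a constant c ∈ K such that A − C = c·B. -/
open Polynomial

/-- If `(A'·B − A·B')·F = p·A·B·C` and `(C'·B − C·B')·F = p·A·B·C`, then
`A − C` is a constant multiple of `B`. -/
theorem log_deriv_dependency {K : Type*} [Field K] [CharZero K]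
    (A B C F : K[X]) (hB : B ≠ 0) (hF : F ≠ 0) (p : K)
    (h1 : (derivative A * B - A * derivative B) * F = Polynomial.C p * (A * B * C))
    (h2 : (derivative C * B - C * derivative B) * F = Polynomial.C p * (A * B * C)) :
    ∃ c : K, A - C = Polynomial.C c * B := by
  classical
  set D : K[X] := A - C with hD
  have hw : derivative D * B - D * derivative B = 0 := by
    have h3 : (derivative A * B - A * derivative B) * F
        = (derivative C * B - C * derivative B) * F := by rw [h1, h2]
    have h4 : (derivative D * B - D * derivative B) * F = 0 := by
      simp only [hD, derivative_sub]
      ring_nf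
      ring_nf at h3
      linear_combination h3
    rcases mul_eq_zero.1 h4 with h | h
    · exact h
    · exact absurd h hF
  by_cases hD0 : D = 0
  · exact ⟨0, by simp [← hD, hD0]⟩
  · set g : K[X] := GCDMonoid.gcd D B with hg
    have hg0 : g ≠ 0 := gcd_ne_zero_of_left hD0
    set d : K[X] := D / g with hdq
    set b : K[X] := B / g with hbq
    have hDd : D = g * d := by
      rw [hdq, EuclideanDomain.mul_div_cancel' hg0 (gcd_dvd_left D B)]
    have hBb : B = g * b := by
      rw [hbq, EuclideanDomain.mul_div_cancel' hg0 (gcd_dvd_right D B)]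
    have hcop : IsCoprime d b := isCoprime_div_gcd_div_gcd hB
    have hw2 : wronskian d b = 0 := by
      have : g * g * (wronskian d b) = 0 := by
        rw [wronskian]
        have := hw
        rw [hDd, hBb] at this
        simp only [derivative_mul] at this
        linear_combination -this
      rcases mul_eq_zero.1 this with h | h
      · exact absurd h (mul_ne_zero hg0 hg0)
      · exact h
    obtain ⟨hd', hb'⟩ := hcop.wronskian_eq_zero_iff.1 hw2
    have hd : d = Polynomial.C (d.coeff 0) := eq_C_of_derivative_eq_zero hd'
    have hb : b = Polynomial.C (b.coeff 0) := eq_C_of_derivative_eq_zero hb'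
    have hb0 : b.coeff 0 ≠ 0 := by
      intro h
      apply hB
      rw [hBb, hb, h]; simp
    refine ⟨d.coeff 0 / b.coeff 0, ?_⟩
    rw [hDd, hBb, hd, hb]
    simp only [Polynomial.coeff_C_zero, div_eq_mul_inv, ← Polynomial.C_mul]
    rw [mul_comm g (Polynomial.C (b.coeff 0)), ← mul_assoc, ← Polynomial.C_mul,
      inv_mul_cancel_right₀ hb0, mul_comm]
end

section
/- Let n ≥ 1 be a natural number and let F, G ∈ ℂ[X] be coprime polynomials with deg F = 2n and deg G = 3n, and suppose F³ ≠ G². Then deg(F³ − G²) ≥ n + 1. -/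
open Polynomial UniqueFactorizationMonoid UniqueFactorizationDomain

/-- Davenport–Stothers bound: for coprime `F, G ∈ ℂ[X]` with `deg F = 2n`,
`deg G = 3n` and `F³ ≠ G²`, the degree of `F³ − G²` is at least `n + 1`. -/
theorem davenport_stothers_bound (n : ℕ) (hn : 1 ≤ n) (F G : ℂ[X])
    (hcop : IsCoprime F G) (hF : F.natDegree = 2 * n) (hG : G.natDegree = 3 * n)
    (hne : F ^ 3 ≠ G ^ 2) :
    n + 1 ≤ (F ^ 3 - G ^ 2).natDegree := by
  classical
  have hF0 : F ≠ 0 := by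
    intro h; rw [h, natDegree_zero] at hF; omega
  have hG0 : G ≠ 0 := by
    intro h; rw [h, natDegree_zero] at hG; omega
  set a : ℂ[X] := F ^ 3 with ha_def
  set b : ℂ[X] := -G ^ 2 with hb_def
  set c : ℂ[X] := G ^ 2 - F ^ 3 with hc_def
  have ha : a ≠ 0 := pow_ne_zero _ hF0
  have hb : b ≠ 0 := neg_ne_zero.mpr (pow_ne_zero _ hG0)
  have hc : c ≠ 0 := by
    rw [hc_def]; exact sub_ne_zero.mpr (Ne.symm hne)
  have hcop' : IsCoprime (F ^ 3) (G ^ 2) := hcop.pow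
  have hab : IsCoprime a b := hcop'.neg_right
  have hbc : IsCoprime b c := by
    have h2 : IsCoprime (G ^ 2) c := by
      have h1 := (IsCoprime.neg_right (R := ℂ[X]) (y := F ^ 3) hcop'.symm).add_mul_left_right 1
      simpa [hc_def, sub_eq_add_neg, add_comm] using h1
    exact h2.neg_left
  have hca : IsCoprime c a := by
    have h2 : IsCoprime (F ^ 3) c := by
      have h1 := hcop'.add_mul_left_right (-1)
      simpa [hc_def, sub_eq_add_neg, add_comm] using h1
    exact h2.symm
  have hsum : a + b + c = 0 := by rw [ha_def, hb_def, hc_def]; ring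
  rcases Polynomial.abc ha hb hc hab hsum with ⟨h1, _, _⟩ | ⟨hda, _, _⟩
  · -- radical bound
    have hrad : radical (a * b * c) = radical a * radical b * radical c := by
      rw [radical_mul (hca.symm.mul_left hbc).isRelPrime, radical_mul hab.isRelPrime]
    have hra : radical a = radical F := radical_pow F (by norm_num)
    have hrb : radical b = radical G := by
      rw [hb_def, radical_neg, radical_pow G (by norm_num)]
    have dra : (radical F).natDegree ≤ F.natDegree :=
      natDegree_le_of_dvd (radical_dvd_self (a := F)) hF0
    have drb : (radical G).natDegree ≤ G.natDegree :=
      natDegree_le_of_dvd (radical_dvd_self (a := G)) hG0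
    have drc : (radical c).natDegree ≤ c.natDegree :=
      natDegree_le_of_dvd (radical_dvd_self (a := c)) hc
    have hdeg : (radical (a * b * c)).natDegree
        = (radical F).natDegree + (radical G).natDegree + (radical c).natDegree := by
      rw [hrad, hra, hrb, natDegree_mul (mul_ne_zero (radical_ne_zero (a := F)) (radical_ne_zero (a := G)))
        (radical_ne_zero (a := c)), natDegree_mul (radical_ne_zero (a := F)) (radical_ne_zero (a := G))]
    have hna : a.natDegree = 6 * n := by
      rw [ha_def, natDegree_pow, hF]; ring
    have hnc : c.natDegree = (F ^ 3 - G ^ 2).natDegree := by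
      rw [hc_def, ← natDegree_neg, neg_sub]
    rw [hF] at dra
    rw [hG] at drb
    rw [hnc] at drc
    rw [hdeg, hna] at h1
    show n + 1 ≤ (F ^ 3 - G ^ 2).natDegree
    omega
  · -- derivative zero case is impossible
    exfalso
    have : a.natDegree = 0 := natDegree_eq_zero_of_derivative_eq_zero hda
    rw [ha_def, natDegree_pow, hF] at this
    omega
end

section
/- Let R be a commutative ring, let F, G, H ∈ R[X] and c ∈ R. Suppose c·G = 3·F′·H − F·H′ and c·F² = 2·G′·H − G·H′. Then c²·F² = 6·F″·H² + F′·H′·H − 2·F·H″·H + F·(H′)². -/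
open Polynomial

/-- Elimination of `G` from the two logarithmic-derivative relations of a
Davenport–Stothers triple: from `c·G = 3F'H − FH'` and `c·F² = 2G'H − GH'`
we get `c²·F² = 6F''H² + F'H'H − 2FH''H + F·(H')²`. -/
theorem davenport_stothers_eliminate_G {R : Type*} [CommRing R]
    (F G H : R[X]) (c : R)
    (h1 : Polynomial.C c * G = 3 * derivative F * H - F * derivative H)
    (h2 : Polynomial.C c * F ^ 2 = 2 * derivative G * H - G * derivative H) :
    Polynomial.C c ^ 2 * F ^ 2 =
      6 * derivative (derivative F) * H ^ 2
      + derivative F * derivative H * H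
      - 2 * F * derivative (derivative H) * H
      + F * derivative H ^ 2 := by
  have h3 : Polynomial.C c * derivative G =
      3 * derivative (derivative F) * H + 2 * derivative F * derivative H
        - F * derivative (derivative H) := by
    have h := congrArg derivative h1
    simp only [derivative_mul, derivative_sub, derivative_C, derivative_ofNat,
      zero_mul, mul_zero, zero_add, add_zero] at h
    linear_combination h
  linear_combination Polynomial.C c * h2 + 2 * H * h3 - derivative H * h1
end

section
/- Let K be a field, let F, H ∈ K[X] be nonzero coprime polynomials, and let c ∈ K. Suppose c²·F² = 6·F″·H² + F′·H′·H − 2·F·H″·H + F·(H′)². Then there exists a polynomial Z ∈ K[X] such that c²·F − (H′)² = H·Z and 6·F″·H + F′·H′ − 2·F·H″ = F·Z. -/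
open Polynomial

/-- For coprime nonzero `F, H` with
`c²F² = 6F''H² + F'H'H − 2FH''H + F(H')²`, the common rational function
`(c²F − (H')²)/H = (6F''H + F'H' − 2FH'')/F` is a polynomial `Z`. -/
theorem davenport_stothers_Z_exists {K : Type*} [Field K]
    (F H : K[X]) (hF : F ≠ 0) (hH : H ≠ 0) (hcop : IsCoprime F H) (c : K)
    (h : Polynomial.C c ^ 2 * F ^ 2 =
      6 * derivative (derivative F) * H ^ 2
      + derivative F * derivative H * H
      - 2 * F * derivative (derivative H) * H
      + F * derivative H ^ 2) :
    ∃ Z : K[X],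
      Polynomial.C c ^ 2 * F - derivative H ^ 2 = H * Z ∧
      6 * derivative (derivative F) * H + derivative F * derivative H
        - 2 * F * derivative (derivative H) = F * Z := by
  set W : K[X] := 6 * derivative (derivative F) * H + derivative F * derivative H
      - 2 * F * derivative (derivative H) with hW
  have key : F * (Polynomial.C c ^ 2 * F - derivative H ^ 2) = H * W := by
    rw [hW]; ring_nf; linear_combination h
  have hdvd : H ∣ Polynomial.C c ^ 2 * F - derivative H ^ 2 := by
    have : H ∣ F * (Polynomial.C c ^ 2 * F - derivative H ^ 2) := ⟨W, key⟩
    exact (hcop.symm.dvd_of_dvd_mul_left this)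
  obtain ⟨Z, hZ⟩ := hdvd
  refine ⟨Z, hZ, ?_⟩
  have : H * (F * Z) = H * W := by rw [← key, hZ]; ring
  exact (mul_left_cancel₀ hH this).symm
end

section
/- Let K be a field of characteristic 0, let n ≥ 1 be a natural number, let F, H ∈ K[X] be monic polynomials with deg F = 2n and deg H = n + 1, and let Z ∈ K[X] satisfy F·Z = 6·F″·H + F′·H′ − 2·F·H″. Then deg Z = n − 1 and the leading coefficient of Z equals the image of 12n(2n−1) in K. -/
open Polynomial

private lemma ds_deriv_deg_lc {K : Type*} [Field K] [CharZero K] (p : K[X]) (d : ℕ)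
    (hd : p.natDegree = d + 1) :
    (derivative p).natDegree = d ∧
      (derivative p).leadingCoeff = p.leadingCoeff * ((d : K) + 1) := by
  have hdeg : (derivative p).natDegree = d := by
    have h := degree_derivative_eq p (by omega)
    rw [hd] at h
    simp only [Nat.add_sub_cancel] at h
    exact natDegree_eq_of_degree_eq_some h
  refine ⟨hdeg, ?_⟩
  rw [leadingCoeff, hdeg, coeff_derivative, ← hd, coeff_natDegree]

/-- For monic `F`, `H` of degrees `2n` and `n+1`, a polynomial `Z` with
`F·Z = 6F''H + F'H' − 2FH''` has degree `n − 1` and leading coefficient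
`12n(2n−1)`. -/
theorem davenport_stothers_Z_degree {K : Type*} [Field K] [CharZero K]
    (n : ℕ) (hn : 1 ≤ n) (F H Z : K[X]) (hF : F.Monic) (hH : H.Monic)
    (hFdeg : F.natDegree = 2 * n) (hHdeg : H.natDegree = n + 1)
    (hZ : F * Z = 6 * derivative (derivative F) * H + derivative F * derivative H
      - 2 * F * derivative (derivative H)) :
    Z.natDegree = n - 1 ∧ Z.leadingCoeff = ((12 * n * (2 * n - 1) : ℕ) : K) := by
  obtain ⟨m, rfl⟩ : ∃ m, n = m + 1 := ⟨n - 1, by omega⟩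
  -- degrees and leading coefficients of derivatives
  obtain ⟨hF1d, hF1l⟩ := ds_deriv_deg_lc F (2 * m + 1) (by omega)
  obtain ⟨hF2d, hF2l⟩ := ds_deriv_deg_lc (derivative F) (2 * m) (by omega)
  obtain ⟨hH1d, hH1l⟩ := ds_deriv_deg_lc H (m + 1) (by omega)
  obtain ⟨hH2d, hH2l⟩ := ds_deriv_deg_lc (derivative H) m (by omega)
  set R : K[X] := 6 * derivative (derivative F) * H + derivative F * derivative H
      - 2 * F * derivative (derivative H) with hR
  -- the key coefficient
  have hc1 : (derivative (derivative F) * H).coeff (3 * m + 2)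
      = (derivative (derivative F)).leadingCoeff * H.leadingCoeff := by
    rw [show 3 * m + 2 = (derivative (derivative F)).natDegree + H.natDegree by
      rw [hF2d, hHdeg]; ring]
    exact coeff_mul_degree_add_degree _ _
  have hc2 : (derivative F * derivative H).coeff (3 * m + 2)
      = (derivative F).leadingCoeff * (derivative H).leadingCoeff := by
    rw [show 3 * m + 2 = (derivative F).natDegree + (derivative H).natDegree by
      rw [hF1d, hH1d]; ring]
    exact coeff_mul_degree_add_degree _ _
  have hc3 : (F * derivative (derivative H)).coeff (3 * m + 2)
      = F.leadingCoeff * (derivative (derivative H)).leadingCoeff := by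
    rw [show 3 * m + 2 = F.natDegree + (derivative (derivative H)).natDegree by
      rw [hFdeg, hH2d]; ring]
    exact coeff_mul_degree_add_degree _ _
  have hkey : R.coeff (3 * m + 2) = ((12 * (m + 1) * (2 * m + 1) : ℕ) : K) := by
    rw [hR, coeff_sub, coeff_add, mul_assoc (6 : K[X]), mul_assoc (2 : K[X]),
      coeff_ofNat_mul, coeff_ofNat_mul, hc1, hc2, hc3]
    simp only [hF2l, hF1l, hH2l, hH1l, hF.leadingCoeff, hH.leadingCoeff]
    push_cast
    ring
  have hcne : ((12 * (m + 1) * (2 * m + 1) : ℕ) : K) ≠ 0 := by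
    rw [Nat.cast_ne_zero]; positivity
  -- degree bound for R
  have hb1 : (6 * derivative (derivative F) * H).natDegree ≤ 3 * m + 2 := by
    calc (6 * derivative (derivative F) * H).natDegree
        ≤ (6 * derivative (derivative F)).natDegree + H.natDegree := natDegree_mul_le
      _ ≤ ((6 : K[X]).natDegree + (derivative (derivative F)).natDegree) + H.natDegree :=
          Nat.add_le_add_right natDegree_mul_le _
      _ ≤ 3 * m + 2 := by simp [hF2d, hHdeg]; omega
  have hb2 : (derivative F * derivative H).natDegree ≤ 3 * m + 2 :=
    natDegree_mul_le.trans (by rw [hF1d, hH1d]; omega)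
  have hb3 : (2 * F * derivative (derivative H)).natDegree ≤ 3 * m + 2 := by
    calc (2 * F * derivative (derivative H)).natDegree
        ≤ (2 * F).natDegree + (derivative (derivative H)).natDegree := natDegree_mul_le
      _ ≤ ((2 : K[X]).natDegree + F.natDegree) + (derivative (derivative H)).natDegree :=
          Nat.add_le_add_right natDegree_mul_le _
      _ ≤ 3 * m + 2 := by simp [hFdeg, hH2d]; omega
  have hRle : R.natDegree ≤ 3 * m + 2 :=
    (natDegree_sub_le _ _).trans (max_le ((natDegree_add_le _ _).trans (max_le hb1 hb2)) hb3)
  have hRd : R.natDegree = 3 * m + 2 :=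
    natDegree_eq_of_le_of_coeff_ne_zero hRle (by rw [hkey]; exact hcne)
  have hRl : R.leadingCoeff = ((12 * (m + 1) * (2 * m + 1) : ℕ) : K) := by
    rw [leadingCoeff, hRd, hkey]
  have hRne : R ≠ 0 := fun h => hcne (by rw [← hkey, h, coeff_zero])
  have hZne : Z ≠ 0 := fun h => hRne (by rw [← hZ, h, mul_zero])
  have hdeg : F.natDegree + Z.natDegree = 3 * m + 2 := by
    rw [← natDegree_mul hF.ne_zero hZne, hZ, hRd]
  have hZd : Z.natDegree = m := by omega
  have hZl : Z.leadingCoeff = ((12 * (m + 1) * (2 * m + 1) : ℕ) : K) := by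
    have := congrArg leadingCoeff hZ
    rwa [leadingCoeff_mul, hF.leadingCoeff, one_mul, hRl] at this
  refine ⟨by omega, ?_⟩
  rw [hZl]
  congr 1
end

section
/- Let K be an integral domain, let F, H, Z ∈ K[X] with H ≠ 0, and let c ∈ K. Suppose c²·F = H·Z + (H′)² and 6·F″·H + F′·H′ − 2·F·H″ = F·Z. Then 12·H′·H‴ + 12·(H″)² + 4·H″·Z + 13·H′·Z′ + 6·H·Z″ = Z². -/
open Polynomial

/-- The differential relation between `H` and `Z` for Davenport–Stothers
triples, obtained by eliminating `F`:
`12H'H''' + 12(H'')² + 4H''Z + 13H'Z' + 6HZ'' = Z²`. -/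
theorem davenport_stothers_HZ_relation {K : Type*} [CommRing K] [IsDomain K]
    (F H Z : K[X]) (hH : H ≠ 0) (c : K)
    (h1 : Polynomial.C c ^ 2 * F = H * Z + derivative H ^ 2)
    (h2 : 6 * derivative (derivative F) * H + derivative F * derivative H
      - 2 * F * derivative (derivative H) = F * Z) :
    12 * derivative H * derivative (derivative (derivative H))
      + 12 * derivative (derivative H) ^ 2
      + 4 * derivative (derivative H) * Z
      + 13 * derivative H * derivative Z
      + 6 * H * derivative (derivative Z) = Z ^ 2 := by
  have hd1 : Polynomial.C c ^ 2 * derivative F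
      = derivative H * Z + H * derivative Z
        + 2 * derivative H * derivative (derivative H) := by
    have := congrArg derivative h1
    simp only [derivative_add, derivative_mul, derivative_pow, Polynomial.derivative_C, zero_mul,
      add_mul, mul_zero, zero_add, Nat.cast_ofNat, map_ofNat, pow_one] at this
    linear_combination this
  have hd2 : Polynomial.C c ^ 2 * derivative (derivative F)
      = derivative (derivative H) * Z + 2 * derivative H * derivative Z
        + H * derivative (derivative Z)
        + 2 * derivative (derivative H) ^ 2
        + 2 * derivative H * derivative (derivative (derivative H)) := by
    have := congrArg derivative hd1
    simp only [derivative_mul, derivative_pow, Polynomial.derivative_C, zero_mul,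
      add_mul, mul_zero, zero_add, derivative_add, derivative_ofNat, Nat.cast_ofNat] at this
    linear_combination this
  apply mul_left_cancel₀ hH
  linear_combination (Polynomial.C c ^ 2) * h2 - 6 * H * hd2 - derivative H * hd1
    + (Z + 2 * derivative (derivative H)) * h1
end

section
/- Let R be a commutative ring and n a natural number. Set F = (T R n).comp(1 − 2·X). Then 2·X·(X − 1)·F″ + (2·X − 1)·F′ = 2·n²·F. -/
open Polynomial Polynomial.Chebyshev

/-- The Chebyshev ODE: `(1−X²)T″ − X·T′ + n²·T = 0`. -/
lemma chebyshev_T_ode (R : Type*) [CommRing R] (n : ℤ) :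
    (1 - X ^ 2) * derivative (derivative (T R n)) + (n : R[X]) ^ 2 * T R n
      = X * derivative (T R n) := by
  have h1 := one_sub_X_sq_mul_derivative_T_eq_poly_in_T (R := R) (n - 1)
  rw [sub_add_cancel] at h1
  have hd := congr_arg derivative h1
  simp only [derivative_mul, derivative_sub, derivative_one, derivative_X_pow, derivative_X,
    derivative_intCast, derivative_add, zero_sub, zero_mul, mul_one, one_mul, zero_add,
    add_zero, Nat.cast_ofNat, map_ofNat, pow_one] at hd
  have h2 := T_derivative_eq_U (R := R) n
  have h3 := T_derivative_eq_U (R := R) (n - 1)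
  have h4 := T_eq_U_sub_X_mul_U (R := R) n
  have h5 := U_sub_two (R := R) n
  linear_combination (norm := (push_cast; ring_nf))
    hd + (X - (n : R[X]) * X) * h2 + (n : R[X]) * h3
      + (n : R[X]) * ((n : R[X]) - 1) * h4 + (n : R[X]) * ((n : R[X]) - 1) * h5

/-- `F = T_n(1−2X)` satisfies the hypergeometric differential equation
`2X(X−1)F'' + (2X−1)F' = 2n²F`. -/
theorem chebyshev_T_hypergeometric (R : Type*) [CommRing R] (n : ℕ) :
    2 * X * (X - 1) * derivative (derivative ((T R n).comp (1 - 2 * X)))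
      + (2 * X - 1) * derivative ((T R n).comp (1 - 2 * X)) =
      2 * (n : R[X]) ^ 2 * (T R n).comp (1 - 2 * X) := by
  have hode := chebyshev_T_ode R (n : ℤ)
  have hcomp := congr_arg (fun p : R[X] => p.comp (1 - 2 * X)) hode
  simp only [add_comp, mul_comp, sub_comp, one_comp, pow_comp, X_comp, ofNat_comp,
    intCast_comp] at hcomp
  have hq : derivative (1 - 2 * X : R[X]) = -2 := by
    simp [derivative_sub, derivative_mul]
  have hc1 : derivative ((T R n).comp (1 - 2 * X))
      = (derivative (T R n)).comp (1 - 2 * X) * (-2) := by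
    rw [derivative_comp, hq]; ring
  have hc2 : derivative (derivative ((T R n).comp (1 - 2 * X)))
      = (derivative (derivative (T R n))).comp (1 - 2 * X) * 4 := by
    rw [hc1, derivative_mul, derivative_comp, hq]
    simp
    ring
  rw [hc2, hc1]
  push_cast at hcomp ⊢
  linear_combination (norm := ring_nf) (-2 : R[X]) * hcomp
end

section
/- Let R be a commutative ring and n ≥ 1 a natural number. Set G = (U R (n−1)).comp(1 − 2·X). Then 2·X·(X − 1)·G″ + (6·X − 3)·G′ = 2·(n² − 1)·G. -/
open Polynomial Polynomial.Chebyshev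

lemma chebyshev_U_ode (R : Type*) [CommRing R] (m : ℤ) :
    (1 - X ^ 2) * derivative (derivative (U R m))
      = 3 * X * derivative (U R m) - ((m : R[X]) * ((m : R[X]) + 2)) * U R m := by
  have h1 := congr_arg derivative (add_one_mul_T_eq_poly_in_U (R := R) m)
  have h2 : derivative (T R (m + 1)) = ((m : R[X]) + 1) * U R m := by
    simpa using T_derivative_eq_U (R := R) (m + 1)
  simp only [derivative_mul, derivative_add, derivative_sub, derivative_one, derivative_X,
    derivative_X_pow, derivative_intCast, h2] at h1
  rw [C_eq_natCast] at h1
  push_cast at h1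
  push_cast at h1 ⊢
  linear_combination (norm := ring_nf) h1

/-- `G = U_{n−1}(1−2X)` satisfies the hypergeometric differential equation
`2X(X−1)G'' + (6X−3)G' = 2(n²−1)G`. -/
theorem chebyshev_U_hypergeometric (R : Type*) [CommRing R] (n : ℕ) (hn : 1 ≤ n) :
    2 * X * (X - 1) * derivative (derivative ((U R ((n : ℤ) - 1)).comp (1 - 2 * X)))
      + (6 * X - 3) * derivative ((U R ((n : ℤ) - 1)).comp (1 - 2 * X)) =
      2 * ((n : R[X]) ^ 2 - 1) * (U R ((n : ℤ) - 1)).comp (1 - 2 * X) := by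
  set m : ℤ := (n : ℤ) - 1 with hm
  have hode := congr_arg (fun p : R[X] => p.comp (1 - 2 * X)) (chebyshev_U_ode R m)
  simp only [sub_comp, mul_comp, one_comp, X_comp, pow_comp, ofNat_comp, intCast_comp,
    add_comp] at hode
  push_cast at hode
  have hd : derivative ((U R m).comp (1 - 2 * X)) =
      (derivative (U R m)).comp (1 - 2 * X) * (-2) := by
    rw [derivative_comp]; simp; ring
  have hdd : derivative (derivative ((U R m).comp (1 - 2 * X))) =
      (derivative (derivative (U R m))).comp (1 - 2 * X) * 4 := by
    rw [hd, derivative_mul, derivative_comp]; simp; ring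
  rw [hdd, hd]
  have hcast : ((m : R[X]) * ((m : R[X]) + 2)) = (n : R[X]) ^ 2 - 1 := by
    rw [hm]; push_cast; ring
  rw [hcast] at hode
  linear_combination (norm := ring_nf) -2 * hode
end

section
/- Let K be a field with char K ≠ 2, let A ∈ K be a non-square, let L be a quadratic extension of K containing an element s with s² = A, and let σ : L ≃ₐ[K] L be the nontrivial automorphism, so σ(s) = −s. Let B ∈ K with B ≠ 0 and let b₀, b₁, d₀, d₁ ∈ K. In the field RatFunc L of rational functions, set μ = (s·X + (b₀ + b₁·s)) / (X + (d₀ + d₁·s)), let σ̂(μ) = ((−s)·X + (b₀ − b₁·s)) / (X + (d₀ − d₁·s)) be the result of applying σ to the coefficients of μ, and let μ∘ν = (s·B + (b₀ + b₁·s)·X) / (B + (d₀ + d₁·s)·X) be the result of substituting ν = B/X into μ. Then σ̂(μ) = μ∘ν holds in RatFunc L if and only if b₁ = −d₀, b₀ = −A·d₁, and d₀² = A·d₁² + B. -/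
open Polynomial in
private lemma quad_poly_eq_iff {R : Type*} [CommRing R] {a b c a' b' c' : R} :
    (C a * X ^ 2 + C b * X + C c : R[X]) = C a' * X ^ 2 + C b' * X + C c'
      ↔ a = a' ∧ b = b' ∧ c = c' := by
  constructor
  · intro h
    refine ⟨?_, ?_, ?_⟩
    · have := congrArg (fun p => Polynomial.coeff p 2) h
      simpa using this
    · have := congrArg (fun p => Polynomial.coeff p 1) h
      simpa using this
    · have := congrArg (fun p => Polynomial.coeff p 0) h
      simpa using this
  · rintro ⟨rfl, rfl, rfl⟩; rfl

/-- The conic condition for realization fields: with `μ = (sX + b₀ + b₁s)/(X + d₀ + d₁s)`,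
the identity `σ̂(μ) = μ∘ν` (where `ν : x ↦ B/x` and `σ̂` conjugates `s ↦ −s` in the
coefficients) holds if and only if `b₁ = −d₀`, `b₀ = −A·d₁` and `d₀² = A·d₁² + B`. -/
theorem moebius_conic_condition {K L : Type*} [Field K] [Field L] [Algebra K L]
    (hchar : ringChar K ≠ 2) (A : K) (hA : ¬ IsSquare A)
    (hquad : Module.finrank K L = 2)
    (s : L) (hs : s ^ 2 = algebraMap K L A)
    (σ : L ≃ₐ[K] L) (hσ : σ s = -s)
    (B : K) (hB : B ≠ 0) (b₀ b₁ d₀ d₁ : K) :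
    (RatFunc.C (-s) * RatFunc.X
        + RatFunc.C (algebraMap K L b₀ - algebraMap K L b₁ * s)) /
      (RatFunc.X + RatFunc.C (algebraMap K L d₀ - algebraMap K L d₁ * s))
    = (RatFunc.C s * RatFunc.C (algebraMap K L B)
        + RatFunc.C (algebraMap K L b₀ + algebraMap K L b₁ * s) * RatFunc.X) /
      (RatFunc.C (algebraMap K L B)
        + RatFunc.C (algebraMap K L d₀ + algebraMap K L d₁ * s) * RatFunc.X)
    ↔ (b₁ = -d₀ ∧ b₀ = -(A * d₁) ∧ d₀ ^ 2 = A * d₁ ^ 2 + B) := by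
  have hinj : Function.Injective (algebraMap K L) := (algebraMap K L).injective
  have hA0 : A ≠ 0 := fun h => hA ⟨0, by rw [h, mul_zero]⟩
  have hs0 : s ≠ 0 := by
    intro h
    apply hA0
    apply hinj
    rw [map_zero, ← hs, h]
    ring
  have indep : ∀ u v : K, algebraMap K L u + algebraMap K L v * s = 0 → u = 0 ∧ v = 0 := by
    intro u v h
    by_cases hv : v = 0
    · subst hv
      simp only [map_zero, zero_mul, add_zero] at h
      exact ⟨hinj (by simpa using h), rfl⟩
    · exfalso
      apply hA
      have hvL : algebraMap K L v ≠ 0 := fun hh => hv (hinj (by simpa using hh))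
      have hsv : s = algebraMap K L (-u / v) := by
        rw [map_div₀, map_neg, eq_div_iff hvL]
        linear_combination h
      refine ⟨-u / v, hinj ?_⟩
      rw [map_mul, ← hsv, ← hs]; ring
  have two_ne : (2 : L) ≠ 0 := by
    have h2K : (2 : K) ≠ 0 := Ring.two_ne_zero hchar
    intro h
    apply h2K
    apply hinj
    rw [map_ofNat, map_zero, h]
  -- denominators are nonzero
  have hd1 : (RatFunc.X + RatFunc.C (algebraMap K L d₀ - algebraMap K L d₁ * s)
      : RatFunc L) ≠ 0 := by
    rw [← RatFunc.algebraMap_X, ← RatFunc.algebraMap_C, ← map_add]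
    exact RatFunc.algebraMap_ne_zero (Polynomial.X_add_C_ne_zero _)
  have hd2 : (RatFunc.C (algebraMap K L B)
      + RatFunc.C (algebraMap K L d₀ + algebraMap K L d₁ * s) * RatFunc.X : RatFunc L) ≠ 0 := by
    rw [← RatFunc.algebraMap_X, ← RatFunc.algebraMap_C, ← RatFunc.algebraMap_C,
      ← map_mul, ← map_add]
    apply RatFunc.algebraMap_ne_zero
    intro hcon
    have := congrArg (fun p => Polynomial.coeff p 0) hcon
    simp only [Polynomial.coeff_add, Polynomial.coeff_C_mul, Polynomial.coeff_X_zero,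
      Polynomial.coeff_C, Polynomial.coeff_zero, mul_zero, add_zero, if_pos rfl] at this
    exact hB (hinj (by simpa using this))
  rw [div_eq_div_iff hd1 hd2]
  simp only [← RatFunc.algebraMap_C, ← RatFunc.algebraMap_X, ← map_mul, ← map_add]
  rw [(RatFunc.algebraMap_injective L).eq_iff]
  have lhs_eq : ((Polynomial.C (-s) * Polynomial.X
        + Polynomial.C (algebraMap K L b₀ - algebraMap K L b₁ * s))
      * (Polynomial.C (algebraMap K L B)
        + Polynomial.C (algebraMap K L d₀ + algebraMap K L d₁ * s) * Polynomial.X) : Polynomial L)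
      = Polynomial.C (-s * (algebraMap K L d₀ + algebraMap K L d₁ * s)) * Polynomial.X ^ 2
        + Polynomial.C (-s * algebraMap K L B
            + (algebraMap K L b₀ - algebraMap K L b₁ * s)
              * (algebraMap K L d₀ + algebraMap K L d₁ * s)) * Polynomial.X
        + Polynomial.C ((algebraMap K L b₀ - algebraMap K L b₁ * s) * algebraMap K L B) := by
    simp only [map_mul, map_add, map_sub, map_neg]
    ring
  have rhs_eq : ((Polynomial.C (s * algebraMap K L B)
        + Polynomial.C (algebraMap K L b₀ + algebraMap K L b₁ * s) * Polynomial.X)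
      * (Polynomial.X + Polynomial.C (algebraMap K L d₀ - algebraMap K L d₁ * s)) : Polynomial L)
      = Polynomial.C (algebraMap K L b₀ + algebraMap K L b₁ * s) * Polynomial.X ^ 2
        + Polynomial.C (s * algebraMap K L B
            + (algebraMap K L b₀ + algebraMap K L b₁ * s)
              * (algebraMap K L d₀ - algebraMap K L d₁ * s)) * Polynomial.X
        + Polynomial.C (s * algebraMap K L B * (algebraMap K L d₀ - algebraMap K L d₁ * s)) := by
    simp only [map_mul, map_add, map_sub, map_neg]
    ring
  rw [lhs_eq, rhs_eq, quad_poly_eq_iff]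
  constructor
  · rintro ⟨h2, h1, _h0⟩
    have e2 : algebraMap K L (b₀ + A * d₁) + algebraMap K L (b₁ + d₀) * s = 0 := by
      simp only [map_add, map_mul]
      linear_combination -h2 - algebraMap K L d₁ * hs
    obtain ⟨e2a, e2b⟩ := indep _ _ e2
    have hb1 : b₁ = -d₀ := by linear_combination e2b
    have hb0 : b₀ = -(A * d₁) := by linear_combination e2a
    have e1 : algebraMap K L (b₀ * d₁ - b₁ * d₀ - B) * (2 * s) = 0 := by
      simp only [map_sub, map_mul]
      linear_combination h1
    have e1' : b₀ * d₁ - b₁ * d₀ - B = 0 := by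
      rcases mul_eq_zero.mp e1 with h | h
      · exact hinj (by simpa using h)
      · exact absurd h (mul_ne_zero two_ne hs0)
    refine ⟨hb1, hb0, ?_⟩
    linear_combination e1' - d₁ * hb0 + d₀ * hb1
  · rintro ⟨hb1, hb0, hc⟩
    subst hb1 hb0
    have hcL : (algebraMap K L d₀) ^ 2
        = algebraMap K L A * (algebraMap K L d₁) ^ 2 + algebraMap K L B := by
      have := congrArg (algebraMap K L) hc
      simpa [map_add, map_mul, map_pow] using this
    refine ⟨?_, ?_, ?_⟩
    · simp only [map_neg, map_mul]
      linear_combination -(algebraMap K L d₁) * hs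
    · simp only [map_neg, map_mul]
      linear_combination 2 * s * hcL
    · simp only [map_neg, map_mul]
      linear_combination algebraMap K L d₁ * algebraMap K L B * hs
end

section
/- Let L be a field, let σ : L ≃+* L be a field automorphism, and let σ̂ : RatFunc L ≃+* RatFunc L be the induced automorphism acting on coefficients and fixing X. For f ∈ RatFunc L and a nonconstant m ∈ RatFunc L, write f ∘ m for the image of f under the field embedding of RatFunc L into itself that is the identity on L and sends X to m. Let φ, g, μ, ν ∈ RatFunc L, where μ and ν are Möbius transformations (i.e. of the form (aX + b)/(cX + d) with a·d − b·c ≠ 0). If φ = g ∘ μ, σ̂(φ) = φ ∘ ν, and σ̂(μ) = μ ∘ ν, then σ̂(g) = g. -/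
lemma ratfunc_ringHom_ext {L K : Type*} [Field L] [Field K]
    (F G : RatFunc L →+* K)
    (hC : ∀ a : L, F (RatFunc.C a) = G (RatFunc.C a))
    (hX : F RatFunc.X = G RatFunc.X) : ∀ f, F f = G f := by
  have hpoly : F.comp (algebraMap (Polynomial L) (RatFunc L))
      = G.comp (algebraMap (Polynomial L) (RatFunc L)) := by
    apply Polynomial.ringHom_ext
    · intro a
      simpa [RatFunc.algebraMap_C] using hC a
    · simpa [RatFunc.algebraMap_X] using hX
  intro f
  have h1 : F (algebraMap (Polynomial L) (RatFunc L) f.num)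
      = G (algebraMap (Polynomial L) (RatFunc L) f.num) :=
    RingHom.congr_fun hpoly _
  have h2 : F (algebraMap (Polynomial L) (RatFunc L) f.denom)
      = G (algebraMap (Polynomial L) (RatFunc L) f.denom) :=
    RingHom.congr_fun hpoly _
  calc F f = F (algebraMap (Polynomial L) (RatFunc L) f.num /
        algebraMap (Polynomial L) (RatFunc L) f.denom) := by
        rw [RatFunc.num_div_denom]
    _ = G f := by rw [map_div₀, h1, h2, ← map_div₀, RatFunc.num_div_denom]

/-- Galois descent step: if `φ = g ∘ μ`, `σ̂(φ) = φ ∘ ν` and `σ̂(μ) = μ ∘ ν`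
(for Möbius transformations `μ`, `ν`), then `σ̂(g) = g`.  Here `σ̂` is the
automorphism of `RatFunc L` acting on coefficients via `σ` and fixing `X`,
and `f ∘ m` is the image of `f` under the `L`-embedding sending `X` to `m`. -/
theorem galois_descent_of_cocycle {L : Type*} [Field L] (σ : L ≃+* L)
    (E : RatFunc L ≃+* RatFunc L)
    (hEC : ∀ a : L, E (RatFunc.C a) = RatFunc.C (σ a))
    (hEX : E RatFunc.X = RatFunc.X)
    (φ g μ ν : RatFunc L)
    -- `μ` is a Möbius transformation
    (a b c d : L) (habcd : a * d - b * c ≠ 0)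
    (hμ : μ = (RatFunc.C a * RatFunc.X + RatFunc.C b) /
              (RatFunc.C c * RatFunc.X + RatFunc.C d))
    -- `ν` is a Möbius transformation
    (a' b' c' d' : L) (habcd' : a' * d' - b' * c' ≠ 0)
    (hν : ν = (RatFunc.C a' * RatFunc.X + RatFunc.C b') /
              (RatFunc.C c' * RatFunc.X + RatFunc.C d'))
    -- composition with `μ`: the field embedding fixing `L` and sending `X` to `μ`
    (Φμ : RatFunc L →+* RatFunc L)
    (hΦμC : ∀ a : L, Φμ (RatFunc.C a) = RatFunc.C a) (hΦμX : Φμ RatFunc.X = μ)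
    -- composition with `ν`: the field embedding fixing `L` and sending `X` to `ν`
    (Φν : RatFunc L →+* RatFunc L)
    (hΦνC : ∀ a : L, Φν (RatFunc.C a) = RatFunc.C a) (hΦνX : Φν RatFunc.X = ν)
    (hφ : φ = Φμ g) (h1 : E φ = Φν φ) (h2 : E μ = Φν μ) :
    E g = g := by
  -- E ∘ Φμ = Φν ∘ Φμ ∘ E  (both send C a ↦ C (σ a), X ↦ E μ)
  have key : ∀ f, E (Φμ f) = Φν (Φμ (E f)) := by
    have := ratfunc_ringHom_ext ((E : RatFunc L →+* RatFunc L).comp Φμ)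
      ((Φν.comp Φμ).comp (E : RatFunc L →+* RatFunc L))
      (fun x => by simp [hΦμC, hΦνC, hEC])
      (by simp [hΦμX, hΦνX, hEX, hΦνC, h2])
    intro f; exact this f
  have hinj : Function.Injective (Φν.comp Φμ) := (Φν.comp Φμ).injective
  apply hinj
  have : E (Φμ g) = Φν (Φμ (E g)) := key g
  rw [← hφ, h1, hφ] at this
  exact this.symm
end
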